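/- Let p be an odd prime and ζ a primitive p-th root of unity, and for 0 ≤ l ≤ p - 1 set u_l = ζ^{-l} + ζ^{-l+2} + ... + ζ^{l} (so u_l = ∑_{i=0}^{l} ζ^{-l+2i}). Then for all 0 ≤ i ≤ j ≤ p - 2 with i + j < p - 2 we have u_i · u_j = u_{j-i} + u_{j-i+2} + ... + u_{i+j}. -/

import Mathlib

theorem stmt_15 (p : ℕ) (hp : p.Prime) (hodd : Odd p) (ζ : ℂ)
    (hζ : IsPrimitiveRoot ζ p) (u : ℕ → ℂ)
    (hu : ∀ l, u l = ∑ m ∈ Finset.range (l + 1), ζ ^ (2 * (m : ℤ) - (l : ℤ)))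
    (i j : ℕ) (hij : i ≤ j) (hj : j ≤ p - 2) (hlt : i + j < p - 2) :
    u i * u j = ∑ t ∈ Finset.range (i + 1), u (j - i + 2 * t) := by
  have hp0 : p ≠ 0 := hp.ne_zero
  have hz0 : ζ ≠ 0 := hζ.ne_zero hp0
  have hz2 : ζ ^ 2 ≠ 1 := by
    intro h
    have : p ∣ 2 := (IsPrimitiveRoot.pow_eq_one_iff_dvd hζ 2).mp h
    have hp2 : p = 2 := (Nat.prime_dvd_prime_iff_eq hp Nat.prime_two).mp this
    rw [hp2] at hodd
    exact absurd hodd (by norm_num)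
  have hw : ζ - ζ⁻¹ ≠ 0 := by
    intro h
    apply hz2
    have := sub_eq_zero.mp h
    field_simp at this
    exact this
  -- key telescoping identity
  have key : ∀ l : ℕ, u l * (ζ - ζ⁻¹) = ζ ^ ((l : ℤ) + 1) - ζ ^ (-(l : ℤ) - 1) := by
    intro l
    rw [hu l, Finset.sum_mul]
    have : ∀ m ∈ Finset.range (l + 1),
        ζ ^ (2 * (m : ℤ) - (l : ℤ)) * (ζ - ζ⁻¹)
          = ζ ^ (2 * ((m : ℤ) + 1) - (l : ℤ) - 1) - ζ ^ (2 * (m : ℤ) - (l : ℤ) - 1) := by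
      intro m _
      rw [mul_sub]
      rw [← zpow_add_one₀ hz0, ← zpow_sub_one₀ hz0]
      ring_nf
    rw [Finset.sum_congr rfl this]
    have := Finset.sum_range_sub (fun m : ℕ => ζ ^ (2 * (m : ℤ) - (l : ℤ) - 1)) (l + 1)
    simp only [Nat.cast_add, Nat.cast_one] at this ⊢
    rw [this]
    norm_num
    ring_nf
  apply mul_right_cancel₀ hw
  rw [mul_assoc, key j, Finset.sum_mul]
  have hrhs : ∀ t ∈ Finset.range (i + 1),
      u (j - i + 2 * t) * (ζ - ζ⁻¹)
        = ζ ^ ((j : ℤ) - (i : ℤ) + 2 * (t : ℤ) + 1) - ζ ^ (-((j : ℤ) - (i : ℤ) + 2 * (t : ℤ)) - 1) := by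
    intro t _
    rw [key]
    have : ((j - i + 2 * t : ℕ) : ℤ) = (j : ℤ) - (i : ℤ) + 2 * (t : ℤ) := by
      push_cast [Nat.cast_sub hij]; ring
    rw [this]
  rw [Finset.sum_congr rfl hrhs, hu i, Finset.sum_mul]
  have hlhs : ∀ m ∈ Finset.range (i + 1),
      ζ ^ (2 * (m : ℤ) - (i : ℤ)) * (ζ ^ ((j : ℤ) + 1) - ζ ^ (-(j : ℤ) - 1))
        = ζ ^ ((j : ℤ) - (i : ℤ) + 2 * (m : ℤ) + 1) - ζ ^ (2 * (m : ℤ) - (i : ℤ) - (j : ℤ) - 1) := by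
    intro m _
    rw [mul_sub, ← zpow_add₀ hz0, ← zpow_add₀ hz0]
    ring_nf
  rw [Finset.sum_congr rfl hlhs]
  rw [Finset.sum_sub_distrib, Finset.sum_sub_distrib]
  congr 1
  -- second sums: reflect
  have := Finset.sum_range_reflect
      (fun t : ℕ => ζ ^ (-((j : ℤ) - (i : ℤ) + 2 * (t : ℤ)) - 1)) (i + 1)
  rw [← this]
  apply Finset.sum_congr rfl
  intro m hm
  have hm' : m ≤ i := Nat.lt_succ_iff.mp (Finset.mem_range.mp hm)
  have hc : ((i + 1 - 1 - m : ℕ) : ℤ) = (i : ℤ) - (m : ℤ) := by omega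
  rw [hc]
  congr 1
  ring
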